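/- Plackett's identity: for a,b ∈ ℝ and ρ ∈ (−1,1), the partial derivative of the bivariate standard normal cdf with respect to the correlation equals the bivariate normal density: ∂Φ₂(a,b;ρ)/∂ρ = φ₂(a,b;ρ), where φ₂(a,b;ρ) = (2π√(1−ρ²))^{-1} exp(−(a² − 2ρab + b²)/(2(1−ρ²))). -/

import Mathlib

open MeasureTheory Real Set

open Filter

/-- Bivariate standard normal density with correlation ρ. -/
noncomputable def phi2 (a b ρ : ℝ) : ℝ :=
  (2 * Real.pi * Real.sqrt (1 - ρ ^ 2))⁻¹ *
    Real.exp (-(a ^ 2 - 2 * ρ * a * b + b ^ 2) / (2 * (1 - ρ ^ 2)))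

/-- Bivariate standard normal cdf with correlation ρ. -/
noncomputable def Phi2 (a b ρ : ℝ) : ℝ :=
  ∫ x in Set.Iic a, ∫ y in Set.Iic b, phi2 x y ρ


noncomputable def gpdf (x : ℝ) : ℝ := (Real.sqrt (2 * Real.pi))⁻¹ * Real.exp (-x ^ 2 / 2)

lemma gpdf_pos (x : ℝ) : 0 < gpdf x := by
  unfold gpdf
  positivity

lemma continuous_gpdf : Continuous gpdf := by
  unfold gpdf
  continuity

lemma integrable_gpdf : Integrable gpdf := by
  have h : Integrable (fun x : ℝ => Real.exp (-(1/2 : ℝ) * x ^ 2)) := integrable_exp_neg_mul_sq (by norm_num)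
  have := h.const_mul (Real.sqrt (2 * Real.pi))⁻¹
  refine this.congr (by
    refine Filter.Eventually.of_forall fun x => ?_
    unfold gpdf
    ring_nf)

noncomputable def gcdf (t : ℝ) : ℝ := ∫ y in Iic t, gpdf y

lemma gcdf_nonneg (t : ℝ) : 0 ≤ gcdf t :=
  integral_nonneg fun x => (gpdf_pos x).le

lemma gcdf_le (t : ℝ) : gcdf t ≤ ∫ y, gpdf y := by
  apply setIntegral_le_integral integrable_gpdf
  exact Filter.Eventually.of_forall fun x => (gpdf_pos x).le

lemma hasDerivAt_gcdf (t : ℝ) : HasDerivAt gcdf (gpdf t) t := by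
  have key : ∀ u : ℝ, gcdf u = gcdf 0 + ∫ y in (0:ℝ)..u, gpdf y := by
    intro u
    have := intervalIntegral.integral_Iic_sub_Iic (integrable_gpdf.integrableOn (s := Iic 0))
      (integrable_gpdf.integrableOn (s := Iic u))
    unfold gcdf
    linarith [this]
  have h2 : HasDerivAt (fun u => gcdf 0 + ∫ y in (0:ℝ)..u, gpdf y) (gpdf t) t := by
    have := (intervalIntegral.integral_hasStrictDerivAt_right
      (continuous_gpdf.intervalIntegrable 0 t) (continuous_gpdf.stronglyMeasurableAtFilter _ _)
      continuous_gpdf.continuousAt).hasDerivAt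
    exact this.const_add (gcdf 0)
  exact h2.congr_of_eventuallyEq (Filter.Eventually.of_forall fun u => (key u))

lemma continuous_gcdf : Continuous gcdf := by
  have : Differentiable ℝ gcdf := fun t => (hasDerivAt_gcdf t).differentiableAt
  exact this.continuous


lemma sq_sqrt_one_sub {r : ℝ} (hr : r ^ 2 < 1) :
    Real.sqrt (1 - r ^ 2) ^ 2 = 1 - r ^ 2 := Real.sq_sqrt (by linarith)

lemma sqrt_one_sub_pos {r : ℝ} (hr : r ^ 2 < 1) : 0 < Real.sqrt (1 - r ^ 2) :=
  Real.sqrt_pos.2 (by linarith)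

lemma phi2_eq (x y r : ℝ) (hr : r ^ 2 < 1) :
    phi2 x y r = gpdf x * ((Real.sqrt (1 - r ^ 2))⁻¹ *
      gpdf ((y - r * x) / Real.sqrt (1 - r ^ 2))) := by
  set s := Real.sqrt (1 - r ^ 2) with hsdef
  have hs2 : s ^ 2 = 1 - r ^ 2 := sq_sqrt_one_sub hr
  have hs0 : 0 < s := sqrt_one_sub_pos hr
  have h2pi : Real.sqrt (2 * Real.pi) * Real.sqrt (2 * Real.pi) = 2 * Real.pi :=
    Real.mul_self_sqrt (by positivity)
  unfold phi2 gpdf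
  rw [← hsdef]
  have hexp : -(x ^ 2 - 2 * r * x * y + y ^ 2) / (2 * (1 - r ^ 2)) =
      -x ^ 2 / 2 + -((y - r * x) / s) ^ 2 / 2 := by
    rw [← hs2]
    field_simp
    linear_combination (x ^ 2) * hs2
  rw [hexp, Real.exp_add]
  have hc : (2 * Real.pi * s)⁻¹ =
      (Real.sqrt (2 * Real.pi))⁻¹ * (s⁻¹ * (Real.sqrt (2 * Real.pi))⁻¹) := by
    have h : 2 * Real.pi * s = Real.sqrt (2 * Real.pi) * (s * Real.sqrt (2 * Real.pi)) := by
      nlinarith [h2pi]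
    rw [h, mul_inv, mul_inv]
  rw [hc]
  ring

lemma image_affine_Iic (s c t : ℝ) (hs : 0 < s) :
    (fun u => s * u + c) '' Iic t = Iic (s * t + c) := by
  ext y
  constructor
  · rintro ⟨u, hu, rfl⟩
    simp only [mem_Iic] at hu ⊢
    nlinarith
  · intro hy
    refine ⟨(y - c) / s, ?_, ?_⟩
    · simp only [mem_Iic] at hy ⊢
      rw [div_le_iff₀ hs]
      nlinarith
    · field_simp
      ring

lemma integral_Iic_comp_affine (f : ℝ → ℝ) (s c b : ℝ) (hs : 0 < s) :
    ∫ y in Iic b, f ((y - c) / s) = s * ∫ u in Iic ((b - c) / s), f u := by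
  have himg : (fun u => s * u + c) '' Iic ((b - c) / s) = Iic b := by
    rw [image_affine_Iic _ _ _ hs]
    congr 1
    field_simp
    ring
  have hderiv : ∀ u ∈ Iic ((b - c) / s), HasDerivWithinAt (fun u => s * u + c) s (Iic ((b - c) / s)) u :=
    fun u _ => by
      simpa using (((hasDerivAt_id u).const_mul s).add_const c).hasDerivWithinAt
  have hinj : InjOn (fun u => s * u + c) (Iic ((b - c) / s)) := by
    intro u1 _ u2 _ h
    simp only at h
    nlinarith
  have := integral_image_eq_integral_abs_deriv_smul measurableSet_Iic hderiv hinj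
    (fun y => f ((y - c) / s))
  rw [himg] at this
  simp only [abs_of_pos hs] at this
  rw [this, ← MeasureTheory.integral_const_mul]
  apply MeasureTheory.integral_congr_ae
  refine Filter.Eventually.of_forall fun u => ?_
  have h1 : (s * u + c - c) / s = u := by field_simp; ring
  simp only [smul_eq_mul, h1]

lemma inner_integral_eq (b x r : ℝ) (hr : r ^ 2 < 1) :
    ∫ y in Iic b, phi2 x y r = gpdf x * gcdf ((b - r * x) / Real.sqrt (1 - r ^ 2)) := by
  set s := Real.sqrt (1 - r ^ 2) with hsdef
  have hs0 : 0 < s := sqrt_one_sub_pos hr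
  calc ∫ y in Iic b, phi2 x y r
      = ∫ y in Iic b, gpdf x * (s⁻¹ * gpdf ((y - r * x) / s)) := by
        apply MeasureTheory.integral_congr_ae
        exact Filter.Eventually.of_forall fun y => phi2_eq x y r hr
    _ = gpdf x * (s⁻¹ * ∫ y in Iic b, gpdf ((y - r * x) / s)) := by
        rw [MeasureTheory.integral_const_mul, MeasureTheory.integral_const_mul]
    _ = gpdf x * gcdf ((b - r * x) / s) := by
        rw [integral_Iic_comp_affine gpdf s (r * x) b hs0]
        unfold gcdf
        field_simp

lemma hasDerivAt_in_r (x b r : ℝ) (hr : r ^ 2 < 1) :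
    HasDerivAt (fun t => gpdf x * gcdf ((b - t * x) / Real.sqrt (1 - t ^ 2)))
      (phi2 x b r * (r * b - x) / (1 - r ^ 2)) r := by
  set s := Real.sqrt (1 - r ^ 2) with hsdef
  have hs2 : s ^ 2 = 1 - r ^ 2 := sq_sqrt_one_sub hr
  have hs0 : 0 < s := sqrt_one_sub_pos hr
  have h1 : HasDerivAt (fun t => b - t * x) (-x) r := by
    simpa using ((hasDerivAt_id r).mul_const x).const_sub b
  have h2 : HasDerivAt (fun t : ℝ => 1 - t ^ 2) (-(2 * r)) r := by
    simpa using (hasDerivAt_pow 2 r).const_sub 1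
  have h3 : HasDerivAt (fun t : ℝ => Real.sqrt (1 - t ^ 2)) (1 / (2 * s) * (-(2 * r))) r := by
    have hne : 1 - r ^ 2 ≠ 0 := by nlinarith
    exact (Real.hasDerivAt_sqrt hne).comp r h2
  have hu : HasDerivAt (fun t => (b - t * x) / Real.sqrt (1 - t ^ 2))
      (((-x) * s - (b - r * x) * (1 / (2 * s) * (-(2 * r)))) / s ^ 2) r :=
    h1.div h3 (ne_of_gt hs0)
  have hN : HasDerivAt (fun t => gcdf ((b - t * x) / Real.sqrt (1 - t ^ 2)))
      (gpdf ((b - r * x) / s) * (((-x) * s - (b - r * x) * (1 / (2 * s) * (-(2 * r)))) / s ^ 2)) r :=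
    (hasDerivAt_gcdf _).comp r hu
  have hfinal := hN.const_mul (gpdf x)
  refine hfinal.congr_deriv ?_
  symm
  rw [phi2_eq x b r hr, ← hsdef, ← hs2]
  set G2 := gpdf ((b - r * x) / s) with hG2
  field_simp
  linear_combination (gpdf x * G2 * x) * hs2

lemma hasDerivAt_in_x (b r x : ℝ) (hr : r ^ 2 < 1) :
    HasDerivAt (fun t => phi2 t b r) (phi2 x b r * (r * b - x) / (1 - r ^ 2)) x := by
  have hd : (1 : ℝ) - r ^ 2 ≠ 0 := by nlinarith
  have hpoly : HasDerivAt (fun t => t ^ 2 - 2 * r * t * b + b ^ 2) (2 * x - 2 * r * b) x := by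
    have := ((hasDerivAt_pow 2 x).sub (((hasDerivAt_id x).const_mul (2 * r)).mul_const b)).add_const (b ^ 2)
    simpa using this
  have hg : HasDerivAt (fun t => -(t ^ 2 - 2 * r * t * b + b ^ 2) / (2 * (1 - r ^ 2)))
      (-(2 * x - 2 * r * b) / (2 * (1 - r ^ 2))) x := hpoly.neg.div_const _
  have hexp := hg.exp
  have := hexp.const_mul ((2 * Real.pi * Real.sqrt (1 - r ^ 2))⁻¹)
  have heq : -(2 * x - 2 * r * b) / (2 * (1 - r ^ 2)) = (r * b - x) / (1 - r ^ 2) := by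
    field_simp
    ring
  rw [heq] at this
  refine this.congr_deriv ?_
  symm
  unfold phi2
  ring

lemma tendsto_phi2_atBot (b r : ℝ) (hr : r ^ 2 < 1) :
    Filter.Tendsto (fun x => phi2 x b r) atBot (nhds 0) := by
  have hd : (0:ℝ) < 2 * (1 - r ^ 2) := by nlinarith
  have h1 : Filter.Tendsto (fun x : ℝ => x * (x - 2 * r * b)) atBot atTop :=
    Filter.Tendsto.atBot_mul_atBot₀ tendsto_id (tendsto_atBot_add_const_right _ _ tendsto_id)
  have h2 : Filter.Tendsto (fun x : ℝ => -(x ^ 2 - 2 * r * x * b + b ^ 2)) atBot atBot := by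
    have h1' := tendsto_atTop_add_const_right atBot (b ^ 2) h1
    have := tendsto_neg_atTop_atBot.comp h1'
    refine this.congr fun x => ?_
    simp only [Function.comp_apply]
    ring
  have h3 : Filter.Tendsto (fun x : ℝ => -(x ^ 2 - 2 * r * x * b + b ^ 2) / (2 * (1 - r ^ 2)))
      atBot atBot := h2.atBot_div_const hd
  have h4 : Filter.Tendsto (fun x : ℝ => Real.exp (-(x ^ 2 - 2 * r * x * b + b ^ 2) / (2 * (1 - r ^ 2))))
      atBot (nhds 0) := Real.tendsto_exp_atBot.comp h3
  have := h4.const_mul ((2 * Real.pi * Real.sqrt (1 - r ^ 2))⁻¹)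
  simpa [phi2] using this

lemma D_bound (b : ℝ) {δ r : ℝ} (hδ : 0 < δ) (hrδ : δ ≤ 1 - r ^ 2) (x : ℝ) :
    |phi2 x b r * (r * b - x) / (1 - r ^ 2)| ≤
      (2 * Real.pi * Real.sqrt δ)⁻¹ * δ⁻¹ * Real.exp (b ^ 2 / 2) *
        ((|b| + |x|) * Real.exp (-x ^ 2 / 4)) := by
  have hr1 : r ^ 2 < 1 := by nlinarith
  have hd : (0:ℝ) < 1 - r ^ 2 := by nlinarith
  have hs0 := sqrt_one_sub_pos hr1
  have hphi_pos : 0 < phi2 x b r := by unfold phi2; positivity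
  rw [abs_div, abs_of_pos hd, abs_mul, abs_of_pos hphi_pos, div_eq_mul_inv]
  have h1 : phi2 x b r ≤ (2 * Real.pi * Real.sqrt δ)⁻¹ * (Real.exp (b ^ 2 / 2) * Real.exp (-x ^ 2 / 4)) := by
    rw [← Real.exp_add]
    unfold phi2
    have hc : (2 * Real.pi * Real.sqrt (1 - r ^ 2))⁻¹ ≤ (2 * Real.pi * Real.sqrt δ)⁻¹ := by
      apply inv_anti₀ (by positivity)
      have := Real.sqrt_le_sqrt hrδ
      nlinarith [Real.pi_pos, Real.sqrt_pos.2 hδ]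
    have harg : -(x ^ 2 - 2 * r * x * b + b ^ 2) / (2 * (1 - r ^ 2)) ≤ b ^ 2 / 2 + -x ^ 2 / 4 := by
      rw [div_le_iff₀ (by positivity : (0:ℝ) < 2 * (1 - r ^ 2))]
      nlinarith [sq_nonneg (r * x - b), mul_nonneg hd.le (by positivity : (0:ℝ) ≤ x ^ 2 / 2 + b ^ 2)]
    have hexp := Real.exp_le_exp.2 harg
    have hpos1 : (0:ℝ) < (2 * Real.pi * Real.sqrt (1 - r ^ 2))⁻¹ := by positivity
    nlinarith [Real.exp_pos (-(x ^ 2 - 2 * r * x * b + b ^ 2) / (2 * (1 - r ^ 2))),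
      Real.exp_pos (b ^ 2 / 2 + -x ^ 2 / 4)]
  have h2 : |r * b - x| ≤ |b| + |x| := by
    have hr' : |r| ≤ 1 := by nlinarith [sq_abs r, abs_nonneg r]
    calc |r * b - x| ≤ |r * b| + |x| := abs_sub _ _
      _ ≤ |b| + |x| := by
          rw [abs_mul]
          nlinarith [abs_nonneg b]
  have h3 : (1 - r ^ 2)⁻¹ ≤ δ⁻¹ := inv_anti₀ hδ hrδ
  calc phi2 x b r * |r * b - x| * (1 - r ^ 2)⁻¹
      ≤ ((2 * Real.pi * Real.sqrt δ)⁻¹ * (Real.exp (b ^ 2 / 2) * Real.exp (-x ^ 2 / 4))) *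
          (|b| + |x|) * δ⁻¹ := by
        apply mul_le_mul (mul_le_mul h1 h2 (abs_nonneg _) (by positivity)) h3
          (by positivity) (by positivity)
    _ = (2 * Real.pi * Real.sqrt δ)⁻¹ * δ⁻¹ * Real.exp (b ^ 2 / 2) *
          ((|b| + |x|) * Real.exp (-x ^ 2 / 4)) := by ring

lemma integrable_bound (c : ℝ) :
    Integrable (fun x : ℝ => (c + |x|) * Real.exp (-x ^ 2 / 4)) := by
  have h1 : Integrable (fun x : ℝ => Real.exp (-(1/4 : ℝ) * x ^ 2)) :=
    integrable_exp_neg_mul_sq (by norm_num)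
  have h2 : Integrable (fun x : ℝ => x ^ (1:ℝ) * Real.exp (-(1/4 : ℝ) * x ^ 2)) :=
    integrable_rpow_mul_exp_neg_mul_sq (by norm_num) (by norm_num)
  have h2' : Integrable (fun x : ℝ => |x| * Real.exp (-(1/4 : ℝ) * x ^ 2)) := by
    have := h2.abs
    refine this.congr (Filter.Eventually.of_forall fun x => ?_)
    simp [abs_mul, abs_of_pos (Real.exp_pos _)]
  have h3 := (h1.const_mul c).add h2'
  refine h3.congr (Filter.Eventually.of_forall fun x => ?_)
  simp only [Pi.add_apply]
  rw [show -x ^ 2 / 4 = -(1/4 : ℝ) * x ^ 2 by ring]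
  ring


set_option maxHeartbeats 1000000 in
/-- Plackett's identity: `∂Φ₂(a,b;ρ)/∂ρ = φ₂(a,b;ρ)` for `ρ ∈ (−1,1)`. -/
theorem plackett_identity (a b ρ : ℝ) (hρ : ρ ∈ Set.Ioo (-1 : ℝ) 1) :
    HasDerivAt (fun r => Phi2 a b r) (phi2 a b ρ) ρ := by
  obtain ⟨hρ1, hρ2⟩ := hρ
  have hρsq : ρ ^ 2 < 1 := by nlinarith
  have habs : |ρ| < 1 := abs_lt.2 ⟨hρ1, hρ2⟩
  set ε : ℝ := (1 - |ρ|) / 2 with hεdef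
  have hεpos : 0 < ε := by simp only [hεdef]; linarith
  set m : ℝ := (1 + |ρ|) / 2 with hmdef
  set δ : ℝ := 1 - m ^ 2 with hδdef
  have hm1 : m < 1 := by simp only [hmdef]; linarith
  have hm0 : 0 ≤ m := by simp only [hmdef]; positivity
  have hδpos : 0 < δ := by simp only [hδdef]; nlinarith
  have hball : ∀ r ∈ Metric.ball ρ ε, δ ≤ 1 - r ^ 2 := by
    intro r hr
    rw [Metric.mem_ball, Real.dist_eq] at hr
    have h1 := abs_lt.1 hr
    have hrm : r < m := by
      have h2 := le_abs_self ρ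
      simp only [hmdef, hεdef] at h1 ⊢
      linarith [h1.2]
    have hrm' : -m < r := by
      have h2 := neg_abs_le ρ
      simp only [hmdef, hεdef] at h1 ⊢
      linarith [h1.1]
    simp only [hδdef]
    nlinarith
  have hsub : ∀ r ∈ Metric.ball ρ ε, r ^ 2 < 1 := fun r hr => by nlinarith [hball r hr]
  set K : ℝ := (2 * Real.pi * Real.sqrt δ)⁻¹ * δ⁻¹ * Real.exp (b ^ 2 / 2) with hKdef
  have hbound_int : Integrable (fun x : ℝ => K * ((|b| + |x|) * Real.exp (-x ^ 2 / 4)))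
      (volume.restrict (Iic a)) := ((integrable_bound |b|).const_mul K).restrict
  have hFcont : ∀ r : ℝ, Continuous (fun x => gpdf x * gcdf ((b - r * x) / Real.sqrt (1 - r ^ 2))) := by
    intro r
    apply continuous_gpdf.mul
    apply continuous_gcdf.comp
    exact (continuous_const.sub ((continuous_const.mul continuous_id : Continuous fun x : ℝ => r * x))).div_const _
  have hF'cont : Continuous (fun x => phi2 x b ρ * (ρ * b - x) / (1 - ρ ^ 2)) := by
    apply Continuous.div_const
    apply Continuous.mul _ (continuous_const.sub continuous_id)
    unfold phi2
    apply continuous_const.mul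
    apply Real.continuous_exp.comp
    apply Continuous.div_const
    continuity
  have hFint : Integrable (fun x => gpdf x * gcdf ((b - ρ * x) / Real.sqrt (1 - ρ ^ 2)))
      (volume.restrict (Iic a)) := by
    have hM : 0 ≤ ∫ y, gpdf y := integral_nonneg fun y => (gpdf_pos y).le
    apply Integrable.mono ((integrable_gpdf.const_mul (∫ y, gpdf y)).restrict)
      ((hFcont ρ).aestronglyMeasurable.restrict)
    refine Filter.Eventually.of_forall fun x => ?_
    rw [Real.norm_eq_abs, Real.norm_eq_abs, abs_mul, abs_mul, abs_of_pos (gpdf_pos x),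
      abs_of_nonneg (gcdf_nonneg _), abs_of_nonneg hM]
    nlinarith [gcdf_le ((b - ρ * x) / Real.sqrt (1 - ρ ^ 2)),
      gcdf_nonneg ((b - ρ * x) / Real.sqrt (1 - ρ ^ 2)), gpdf_pos x]
  obtain ⟨hint, hderiv⟩ := hasDerivAt_integral_of_dominated_loc_of_deriv_le
    (μ := volume.restrict (Set.Iic a))
    (F := fun r x => gpdf x * gcdf ((b - r * x) / Real.sqrt (1 - r ^ 2)))
    (F' := fun r x => phi2 x b r * (r * b - x) / (1 - r ^ 2))
    (bound := fun x => K * ((|b| + |x|) * Real.exp (-x ^ 2 / 4)))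
    (Metric.ball_mem_nhds ρ hεpos)
    (Filter.Eventually.of_forall fun r => (hFcont r).aestronglyMeasurable.restrict)
    hFint
    (hF'cont.aestronglyMeasurable.restrict)
    (Filter.Eventually.of_forall fun x r hr => by
      rw [Real.norm_eq_abs]
      exact D_bound b hδpos (hball r hr) x)
    hbound_int
    (Filter.Eventually.of_forall fun x r hr => hasDerivAt_in_r x b r (hsub r hr))
  have hvalue : (∫ x in Iic a, phi2 x b ρ * (ρ * b - x) / (1 - ρ ^ 2)) = phi2 a b ρ := by
    have h := integral_Iic_of_hasDerivAt_of_tendsto'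
      (fun x _ => hasDerivAt_in_x b ρ x hρsq) hint (tendsto_phi2_atBot b ρ hρsq)
    simpa using h
  have heq : (fun r => Phi2 a b r) =ᶠ[nhds ρ]
      (fun r => ∫ x in Iic a, gpdf x * gcdf ((b - r * x) / Real.sqrt (1 - r ^ 2))) := by
    filter_upwards [Metric.ball_mem_nhds ρ hεpos] with r hr
    unfold Phi2
    exact MeasureTheory.integral_congr_ae
      (Filter.Eventually.of_forall fun x => inner_integral_eq b x r (hsub r hr))
  have hfinal := hderiv.congr_of_eventuallyEq heq
  rw [hvalue] at hfinal
  exact hfinal
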